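/- arXiv:1610.06524 — 3 statements merged into one kernel-verified Lean document; each statement's English description precedes it below -/
import Mathlib

section
/- Let K be a field and let J be an ideal of the polynomial ring K[x_1, x_2, …, x_n] containing a polynomial f = g·x_1 + h, where g and h are polynomials in K[x_2, …, x_n] (not involving x_1) and g is not a zero divisor modulo J. Let J_1 = J ∩ K[x_2, …, x_n] be the elimination ideal. Then J is a prime ideal if and only if J_1 is a prime ideal. -/
open MvPolynomial

theorem stmt4 {K : Type} [Field K] {n : ℕ} (J : Ideal (MvPolynomial (Fin (n + 1)) K))
    (g h : MvPolynomial (Fin n) K)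
    (hf : (rename (Fin.succ : Fin n → Fin (n + 1)) g) * X 0
        + rename (Fin.succ : Fin n → Fin (n + 1)) h ∈ J)
    (hreg : Ideal.Quotient.mk J (rename (Fin.succ : Fin n → Fin (n + 1)) g) ∈
      nonZeroDivisors (MvPolynomial (Fin (n + 1)) K ⧸ J)) :
    J.IsPrime ↔
      (J.comap (rename (Fin.succ : Fin n → Fin (n + 1))).toRingHom :
        Ideal (MvPolynomial (Fin n) K)).IsPrime := by
  set σ : Fin n → Fin (n + 1) := Fin.succ with hσ
  set G : MvPolynomial (Fin (n + 1)) K := rename σ g with hG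
  constructor
  · intro hJ
    exact hJ.comap _
  · intro hJ1
    set J1 := J.comap (rename σ).toRingHom with hJ1def
    -- key lemma: every p is congruent mod J, up to a power of G, to a renamed polynomial
    have key : ∀ p : MvPolynomial (Fin (n + 1)) K, ∃ (m : ℕ) (p' : MvPolynomial (Fin n) K),
        G ^ m * p - rename σ p' ∈ J := by
      intro p
      induction p using MvPolynomial.induction_on with
      | C a =>
        refine ⟨0, C a, ?_⟩
        simp
      | add p q hp hq =>
        obtain ⟨m, p', hp'⟩ := hp
        obtain ⟨k, q', hq'⟩ := hq
        refine ⟨m + k, g ^ k * p' + g ^ m * q', ?_⟩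
        have heq : G ^ (m + k) * (p + q) - rename σ (g ^ k * p' + g ^ m * q')
            = G ^ k * (G ^ m * p - rename σ p') + G ^ m * (G ^ k * q - rename σ q') := by
          simp only [map_add, map_mul, map_pow, hG]
          ring
        rw [heq]
        exact J.add_mem (J.mul_mem_left _ hp') (J.mul_mem_left _ hq')
      | mul_X p i hp =>
        obtain ⟨m, p', hp'⟩ := hp
        induction i using Fin.cases with
        | zero =>
          refine ⟨m + 1, -(h * p'), ?_⟩
          have heq : G ^ (m + 1) * (p * X 0) - rename σ (-(h * p'))
              = (G * X 0) * (G ^ m * p - rename σ p')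
                + rename σ p' * (G * X 0 + rename σ h) := by
            simp only [map_neg, map_mul]
            ring
          rw [heq]
          exact J.add_mem (J.mul_mem_left _ hp') (J.mul_mem_left _ hf)
        | succ j =>
          refine ⟨m, p' * X j, ?_⟩
          have heq : G ^ m * (p * X (σ j)) - rename σ (p' * X j)
              = X (σ j) * (G ^ m * p - rename σ p') := by
            simp only [map_mul, rename_X]
            ring
          rw [heq]
          exact J.mul_mem_left _ hp'
    -- auxiliary: killing a power of G
    have kill : ∀ (m : ℕ) (p : MvPolynomial (Fin (n + 1)) K), G ^ m * p ∈ J → p ∈ J := by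
      intro m p hmem
      have h0 : Ideal.Quotient.mk J p * (Ideal.Quotient.mk J G) ^ m = 0 := by
        rw [← map_pow, ← map_mul, mul_comm]
        exact (Ideal.Quotient.eq_zero_iff_mem).2 hmem
      have := (pow_mem hreg m).2 _ h0
      exact (Ideal.Quotient.eq_zero_iff_mem).1 this
    constructor
    · intro htop
      apply hJ1.ne_top
      rw [hJ1def, htop]
      exact Ideal.comap_top
    · intro p q hpq
      obtain ⟨m, p', hp'⟩ := key p
      obtain ⟨k, q', hq'⟩ := key q
      have hmem : rename σ (p' * q') ∈ J := by
        have heq : rename σ (p' * q')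
            = G ^ (m + k) * (p * q)
              - (G ^ k * q) * (G ^ m * p - rename σ p')
              - rename σ p' * (G ^ k * q - rename σ q') := by
          simp only [map_mul]
          ring
        rw [heq]
        exact J.sub_mem (J.sub_mem (J.mul_mem_left _ hpq) (J.mul_mem_left _ hp'))
          (J.mul_mem_left _ hq')
      have hmem1 : p' * q' ∈ J1 := hmem
      rcases hJ1.mem_or_mem hmem1 with h1 | h1
      · left
        apply kill m
        have : rename σ p' ∈ J := h1
        have := J.add_mem hp' this
        simpa using this
      · right
        apply kill k
        have : rename σ q' ∈ J := h1
        have := J.add_mem hq' this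
        simpa using this
end

section
/- Let n ≥ 3 and let T be a binary phylogenetic [n]-tree, so that T has exactly 2n − 3 edges. For each pair of leaves i < j, let α_{ij} ∈ ℝ^{E(T)} be the 0/1 vector indexed by the edges of T whose e-coordinate is 1 exactly when e lies on the path in T from leaf i to leaf j. Then the vectors {α_{ij} : 1 ≤ i < j ≤ n} span ℝ^{E(T)}; equivalently, the (n choose 2) × (2n − 3) matrix with rows α_{ij} has rank 2n − 3. -/
open MvPolynomial

/-- Index type for the variables `p_{ij}`, `1 ≤ i < j ≤ n` (0-indexed here). -/
abbrev PairIdx (n : ℕ) := {x : Fin n × Fin n // x.1 < x.2}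

/-- The polynomial ring `Z^n = ℂ[p_{ij} : 1 ≤ i < j ≤ n]`. -/
abbrev Zn (n : ℕ) := MvPolynomial (PairIdx n) ℂ

/-- The variable `p_{ij}` for `i < j`. -/
noncomputable def pvar {n : ℕ} (i j : Fin n) (h : i < j) : Zn n := X ⟨(i, j), h⟩

/-- The Plücker ideal `I_{2,n}`, generated by the quadratic Plücker relations. -/
noncomputable def pluckerIdeal (n : ℕ) : Ideal (Zn n) :=
  Ideal.span { f | ∃ (i j k l : Fin n) (hij : i < j) (hjk : j < k) (hkl : k < l),
    f = pvar i j hij * pvar k l hkl - pvar i k (hij.trans hjk) * pvar j l (hjk.trans hkl)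
      + pvar i l ((hij.trans hjk).trans hkl) * pvar j k hjk }

/-- `ω`-weight of a monomial exponent vector. -/
noncomputable def mwt {σ : Type*} (ω : σ → ℝ) (m : σ →₀ ℕ) : ℝ :=
  m.sum fun s e => (e : ℝ) * ω s

open Classical in
/-- The initial form of a polynomial: the sum of its terms of maximal `ω`-weight. -/
noncomputable def initialForm {R : Type*} [CommSemiring R] {σ : Type*} (ω : σ → ℝ)
    (f : MvPolynomial σ R) : MvPolynomial σ R :=
  ∑ m ∈ f.support,
    if (∀ m' ∈ f.support, mwt ω m' ≤ mwt ω m) then monomial m (coeff m f) else 0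

/-- The initial ideal of `I` with respect to the weight vector `ω`. -/
noncomputable def initialIdeal {R : Type*} [CommSemiring R] {σ : Type*} (ω : σ → ℝ)
    (I : Ideal (MvPolynomial σ R)) : Ideal (MvPolynomial σ R) :=
  Ideal.span { g | ∃ f ∈ I, f ≠ 0 ∧ g = initialForm ω f }

/-- The `r`-th secant ideal `I^{{r}}`: the ideal of polynomials vanishing on the (closure
of the) set of sums of `r` points of the zero locus of `I`. -/
noncomputable def secantIdeal {σ : Type*} (I : Ideal (MvPolynomial σ ℂ)) (r : ℕ) :
    Ideal (MvPolynomial σ ℂ) :=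
  MvPolynomial.vanishingIdeal ℂ
    { x | ∃ v : Fin r → (σ → ℂ), (∀ i, v i ∈ MvPolynomial.zeroLocus ℂ I) ∧ x = ∑ i, v i }

/-- A binary phylogenetic `[n]`-tree: a finite tree all of whose vertices have degree 1
or 3, with its degree-one vertices (leaves) bijectively labeled by `{1,…,n}`
(here `Fin n`). -/
structure PhyloTree (n : ℕ) where
  V : Type
  finiteV : Finite V
  G : SimpleGraph V
  connected : G.Connected
  acyclic : G.IsAcyclic
  degree13 : ∀ v : V, Nat.card {u // G.Adj v u} = 1 ∨ Nat.card {u // G.Adj v u} = 3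
  leaf : Fin n → V
  leafInj : Function.Injective leaf
  leafDeg : ∀ i, Nat.card {u // G.Adj (leaf i) u} = 1
  leafSurj : ∀ v : V, Nat.card {u // G.Adj v u} = 1 → ∃ i, leaf i = v

attribute [instance] PhyloTree.finiteV

/-- The quartet `ab|cd` holds in `T`: the path from `a` to `b` and the path from `c`
to `d` are vertex-disjoint. -/
def PhyloTree.quartet {n : ℕ} (T : PhyloTree n) (a b c d : Fin n) : Prop :=
  ∃ (p : T.G.Walk (T.leaf a) (T.leaf b)) (q : T.G.Walk (T.leaf c) (T.leaf d)),
    p.IsPath ∧ q.IsPath ∧ ∀ v, v ∈ p.support → v ∉ q.support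

/-- The labeling of `T` is circular: no quartet `ik|jl` with `i < j < k < l`. -/
def PhyloTree.circular {n : ℕ} (T : PhyloTree n) : Prop :=
  ∀ i j k l : Fin n, i < j → j < k → k < l → ¬ T.quartet i k j l

/-- `ω` is a weight vector constructed from `T`: `ω_{ij}` is the path-length distance
between leaves `i` and `j` for some assignment of strictly positive edge lengths. -/
def IsWeightFrom {n : ℕ} (T : PhyloTree n) (ω : PairIdx n → ℝ) : Prop :=
  ∃ ℓ : Sym2 T.V → ℝ, (∀ e ∈ T.G.edgeSet, 0 < ℓ e) ∧
    ∀ (v : PairIdx n) (p : T.G.Walk (T.leaf v.1.1) (T.leaf v.1.2)),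
      p.IsPath → ω v = (p.edges.map ℓ).sum

/-- The Plücker tree ideal `J_T`, generated by the binomials
`p_{ik} p_{jl} - p_{il} p_{jk}` over quartets `ij|kl` of `T` with `i < j < k < l`. -/
noncomputable def treeIdeal {n : ℕ} (T : PhyloTree n) : Ideal (Zn n) :=
  Ideal.span { f | ∃ (i j k l : Fin n) (hij : i < j) (hjk : j < k) (hkl : k < l),
    T.quartet i j k l ∧
    f = pvar i k (hij.trans hjk) * pvar j l (hjk.trans hkl)
      - pvar i l ((hij.trans hjk).trans hkl) * pvar j k hjk }

/-- Leaves `i ≠ j` form a cherry of `T` if they are adjacent to a common vertex. -/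
def PhyloTree.isCherry {n : ℕ} (T : PhyloTree n) (i j : Fin n) : Prop :=
  i ≠ j ∧ ∃ v : T.V, T.G.Adj (T.leaf i) v ∧ T.G.Adj (T.leaf j) v

/-- The number of cherries of `T`. -/
noncomputable def numCherries {n : ℕ} (T : PhyloTree n) : ℕ :=
  Nat.card {x : Fin n × Fin n // x.1 < x.2 ∧ T.isCherry x.1 x.2}


open SimpleGraph Walk

variable {V : Type} {G : SimpleGraph V}

/-- Any two path-walks between the same endpoints in an acyclic graph are equal. -/
lemma walk_eq_of_acyclic (hac : G.IsAcyclic) {u v : V} {q q' : G.Walk u v}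
    (hq : q.IsPath) (hq' : q'.IsPath) : q = q' := by
  have := hac.path_unique ⟨q, hq⟩ ⟨q', hq'⟩
  exact congrArg Subtype.val this

lemma getVert_one_takeUntil [DecidableEq V] {u v z : V} (q : G.Walk u v)
    (hz : z ∈ q.support) (hne : z ≠ u) :
    (q.takeUntil z hz).getVert 1 = q.getVert 1 := by
  have hlen : (q.takeUntil z hz).length ≠ 0 := by
    intro h0
    exact hne (Walk.eq_of_length_eq_zero h0).symm
  have hga := Walk.getVert_append (q.takeUntil z hz) (q.dropUntil z hz) 1
  rw [Walk.take_spec q hz] at hga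
  rcases Nat.lt_or_ge 1 (q.takeUntil z hz).length with h | h
  · rw [hga, if_pos h]
  · have h1 : (q.takeUntil z hz).length = 1 := by omega
    rw [hga, if_neg (by omega), h1]
    have h2 : (q.takeUntil z hz).getVert 1 = z := by
      conv_lhs => rw [← h1]
      exact Walk.getVert_length _
    rw [h2]
    simp [Walk.getVert_zero]

/-- Two paths out of `u` whose second vertices differ meet only at `u`. -/
lemma paths_disjoint (hac : G.IsAcyclic) [DecidableEq V] {u a b : V}
    {q1 : G.Walk u a} {q2 : G.Walk u b} (h1 : q1.IsPath) (h2 : q2.IsPath)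
    (hne : q1.getVert 1 ≠ q2.getVert 1) :
    ∀ z, z ∈ q1.support → z ∈ q2.support → z = u := by
  intro z hz1 hz2
  by_contra hzu
  have e1 : (q1.takeUntil z hz1) = (q2.takeUntil z hz2) :=
    walk_eq_of_acyclic hac (h1.takeUntil hz1) (h2.takeUntil hz2)
  have g1 := getVert_one_takeUntil q1 hz1 hzu
  have g2 := getVert_one_takeUntil q2 hz2 hzu
  rw [e1, g2] at g1
  exact hne g1.symm

/-- A neighbor of the start of a path lying on the path must be its second vertex. -/
lemma neighbor_mem_support_eq (hac : G.IsAcyclic) [DecidableEq V] {u a z : V}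
    {q : G.Walk u a} (hq : q.IsPath) (hadj : G.Adj u z) (hz : z ∈ q.support) :
    z = q.getVert 1 := by
  have hzne : z ≠ u := fun h => G.ne_of_adj hadj h.symm
  have hs : (Walk.cons hadj (Walk.nil : G.Walk z z)).IsPath := by
    simp [Walk.cons_isPath_iff, fun h => G.ne_of_adj hadj h]
  have e1 : (q.takeUntil z hz) = Walk.cons hadj Walk.nil :=
    walk_eq_of_acyclic hac (hq.takeUntil hz) hs
  have g1 := getVert_one_takeUntil q hz hzne
  rw [e1] at g1
  simpa using g1

/-- Appending two paths that meet only at the midpoint yields a path. -/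
lemma isPath_append_of_disjoint {u v w : V} {q : G.Walk u v} {r : G.Walk v w}
    (hq : q.IsPath) (hr : r.IsPath)
    (hd : ∀ z, z ∈ q.support → z ∈ r.support → z = v) : (q.append r).IsPath := by
  rw [Walk.isPath_def, Walk.support_append, List.nodup_append]
  refine ⟨hq.support_nodup, ?_, ?_⟩
  · have := hr.support_nodup
    rw [r.support_eq_cons] at this
    exact (List.nodup_cons.mp this).2
  · intro z hz1 y hz2 hzy
    subst hzy
    have hzr : z ∈ r.support := List.mem_of_mem_tail hz2
    have hzv : z = v := hd z hz1 hzr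
    subst hzv
    have := hr.support_nodup
    rw [r.support_eq_cons] at this
    exact (List.nodup_cons.mp this).1 hz2

/-- Every path in a phylogenetic tree extends to a path ending at a leaf. -/
lemma PhyloTreeExtend {n : ℕ} (T : PhyloTree n) :
    ∀ (N : ℕ) {u v : T.V} (q : T.G.Walk u v), q.IsPath → Nat.card T.V ≤ q.length + N →
    ∃ (i : Fin n) (r : T.G.Walk v (T.leaf i)), (q.append r).IsPath := by
  intro N
  induction N with
  | zero =>
    intro u v q hq hN
    exfalso
    letI : Fintype T.V := Fintype.ofFinite _
    have := hq.length_lt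
    rw [Nat.card_eq_fintype_card] at hN
    omega
  | succ N ih =>
    intro u v q hq hN
    classical
    rcases T.degree13 v with hdeg | hdeg
    · obtain ⟨i, hi⟩ := T.leafSurj v hdeg
      subst hi
      exact ⟨i, Walk.nil, by simpa using hq⟩
    · have hex : ∃ z, T.G.Adj v z ∧ z ∉ q.support := by
        by_contra hall
        push_neg at hall
        have hsub : ∀ z (hz : T.G.Adj v z), z = q.reverse.getVert 1 := fun z hz =>
          neighbor_mem_support_eq T.acyclic hq.reverse hz (by simpa using hall z hz)
        have hss : Subsingleton {z // T.G.Adj v z} :=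
          ⟨fun a b => Subtype.ext ((hsub a a.2).trans (hsub b b.2).symm)⟩
        have := (Finite.card_le_one_iff_subsingleton).mpr hss
        omega
      obtain ⟨z, hz, hzs⟩ := hex
      have hconcat : (q.concat hz).IsPath := by
        rw [Walk.isPath_def, Walk.support_concat,
          List.nodup_append]
        refine ⟨hq.support_nodup, List.nodup_singleton z, ?_⟩
        intro a ha b hb hab
        rw [List.mem_singleton] at hb
        subst hb
        exact hzs (hab ▸ ha)
      obtain ⟨i, r, hr⟩ := ih (q.concat hz) hconcat (by rw [Walk.length_concat]; omega)
      refine ⟨i, Walk.cons hz r, ?_⟩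
      rwa [Walk.concat_append] at hr

/-- Every neighbor direction at a vertex leads to a leaf via a path. -/
lemma PhyloTreeBranchLeaf {n : ℕ} (T : PhyloTree n) {w x : T.V} (h : T.G.Adj w x) :
    ∃ (i : Fin n) (r : T.G.Walk x (T.leaf i)), (Walk.cons h r).IsPath := by
  have hq : (Walk.cons h (Walk.nil : T.G.Walk x x)).IsPath := by
    simp [Walk.cons_isPath_iff, fun he => T.G.ne_of_adj h he]
  obtain ⟨i, r, hr⟩ := PhyloTreeExtend T (Nat.card T.V) (Walk.cons h Walk.nil) hq (by omega)
  exact ⟨i, r, by simpa using hr⟩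

lemma PhyloTreeEdgeCount {n : ℕ} (hn : 3 ≤ n) (T : PhyloTree n) :
    Nat.card T.G.edgeSet = 2 * n - 3 := by
  classical
  letI : Fintype T.V := Fintype.ofFinite _
  have htree : T.G.IsTree := ⟨T.connected, T.acyclic⟩
  have hcard := htree.card_edgeFinset
  have hdeg : ∀ v, T.G.degree v = Nat.card {u // T.G.Adj v u} := by
    intro v
    rw [← SimpleGraph.card_neighborSet_eq_degree, ← Nat.card_eq_fintype_card]
    rfl
  have hLn : (Finset.univ.filter (fun v => T.G.degree v = 1)).card = n := by
    have hb := Finset.card_bij (s := (Finset.univ : Finset (Fin n)))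
      (t := Finset.univ.filter (fun v => T.G.degree v = 1)) (fun i _ => T.leaf i) ?_ ?_ ?_
    · rw [Finset.card_fin] at hb
      exact hb.symm
    · intro i _
      simp only [Finset.mem_filter, Finset.mem_univ, true_and]
      rw [hdeg]
      exact T.leafDeg i
    · intro a _ b _ hab
      exact T.leafInj hab
    · intro v hv
      simp only [Finset.mem_filter, Finset.mem_univ, true_and] at hv
      obtain ⟨i, hi⟩ := T.leafSurj v (by rw [← hdeg]; exact hv)
      exact ⟨i, Finset.mem_univ i, hi⟩
  have hsum := T.G.sum_degrees_eq_twice_card_edges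
  have hfilters := Finset.card_filter_add_card_filter_not
    (s := (Finset.univ : Finset T.V)) (p := fun v => T.G.degree v = 1)
  rw [Finset.card_univ] at hfilters
  have hsplit : ∑ v, T.G.degree v
      = (Finset.univ.filter (fun v => T.G.degree v = 1)).card
        + (Finset.univ.filter (fun v => ¬ T.G.degree v = 1)).card * 3 := by
    rw [← Finset.sum_filter_add_sum_filter_not Finset.univ (fun v => T.G.degree v = 1)]
    congr 1
    · rw [Finset.sum_congr rfl (fun v hv => (Finset.mem_filter.mp hv).2), Finset.sum_const,
        smul_eq_mul, mul_one]
    · have h3 : ∀ v ∈ Finset.univ.filter (fun v => ¬ T.G.degree v = 1), T.G.degree v = 3 := by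
        intro v hv
        simp only [Finset.mem_filter] at hv
        rcases T.degree13 v with h | h
        · exact absurd (by rw [hdeg]; exact h) hv.2
        · rw [hdeg]; exact h
      rw [Finset.sum_congr rfl h3, Finset.sum_const, smul_eq_mul, mul_comm]
  rw [Nat.card_eq_fintype_card, ← SimpleGraph.edgeFinset_card]
  omega

lemma three_card {X : Type*} [Finite X] (h : Nat.card X = 3) (a : X) :
    ∃ b c : X, b ≠ a ∧ c ≠ a ∧ b ≠ c := by
  classical
  letI : Fintype X := Fintype.ofFinite _
  rw [Nat.card_eq_fintype_card] at h
  have h2 : 1 < (Finset.univ.erase a).card := by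
    rw [Finset.card_erase_of_mem (Finset.mem_univ a), Finset.card_univ, h]
    omega
  obtain ⟨b, hb, c, hc, hbc⟩ := Finset.one_lt_card.mp h2
  exact ⟨b, c, Finset.ne_of_mem_erase hb, Finset.ne_of_mem_erase hc, hbc⟩

/-- The indicator vector of the edge set of a walk. -/
noncomputable def pvec {n : ℕ} (T : PhyloTree n) {a b : T.V} (q : T.G.Walk a b) :
    T.G.edgeSet → ℝ :=
  Set.indicator {e : T.G.edgeSet | (e : Sym2 T.V) ∈ q.edges} (fun _ => 1)

open Classical in
lemma pvec_apply {n : ℕ} (T : PhyloTree n) {a b : T.V} (q : T.G.Walk a b) (e : T.G.edgeSet) :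
    pvec T q e = if (e : Sym2 T.V) ∈ q.edges then 1 else 0 := by
  classical
  simp [pvec, Set.indicator_apply]

lemma pvec_congr {n : ℕ} (T : PhyloTree n) {a b : T.V} {q q' : T.G.Walk a b}
    (hq : q.IsPath) (hq' : q'.IsPath) : pvec T q = pvec T q' := by
  rw [walk_eq_of_acyclic T.acyclic hq hq']

lemma pvec_reverse {n : ℕ} (T : PhyloTree n) {a b : T.V} (q : T.G.Walk a b) :
    pvec T q.reverse = pvec T q := by
  funext e
  rw [pvec_apply, pvec_apply]
  congr 1
  rw [Walk.edges_reverse]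
  simp [List.mem_reverse]

lemma pvec_append {n : ℕ} (T : PhyloTree n) {a b c : T.V} {q : T.G.Walk a b}
    {r : T.G.Walk b c} (h : (q.append r).IsPath) :
    pvec T (q.append r) = pvec T q + pvec T r := by
  classical
  have hnd := h.isTrail.edges_nodup
  rw [Walk.edges_append, List.nodup_append] at hnd
  funext e
  simp only [pvec_apply, Pi.add_apply, Walk.edges_append, List.mem_append]
  by_cases h1 : (e : Sym2 T.V) ∈ q.edges <;> by_cases h2 : (e : Sym2 T.V) ∈ r.edges
  · exact absurd rfl (hnd.2.2 _ h1 _ h2)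
  all_goals simp [h1, h2]

/-- The spanning set of path indicator vectors. -/
def Sset {n : ℕ} (T : PhyloTree n)
    (p : ∀ i j : Fin n, T.G.Walk (T.leaf i) (T.leaf j)) : Set (T.G.edgeSet → ℝ) :=
  { v : T.G.edgeSet → ℝ | ∃ i j : Fin n, i < j ∧
      v = Set.indicator {e : T.G.edgeSet | (e : Sym2 T.V) ∈ (p i j).edges}
            (fun _ => (1 : ℝ)) }

lemma pvec_p_mem {n : ℕ} (T : PhyloTree n)
    (p : ∀ i j : Fin n, T.G.Walk (T.leaf i) (T.leaf j))
    (hp : ∀ i j, (p i j).IsPath) {i j : Fin n} (hij : i ≠ j) :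
    pvec T (p i j) ∈ Submodule.span ℝ (Sset T p) := by
  rcases lt_or_gt_of_ne hij with h | h
  · exact Submodule.subset_span ⟨i, j, h, rfl⟩
  · have he : pvec T (p i j) = pvec T (p j i) := by
      rw [← pvec_reverse T (p j i)]
      exact pvec_congr T (hp i j) (hp j i).reverse
    rw [he]
    exact Submodule.subset_span ⟨j, i, h, rfl⟩

lemma two_smul_mem {n : ℕ} (T : PhyloTree n)
    (p : ∀ i j : Fin n, T.G.Walk (T.leaf i) (T.leaf j))
    (hp : ∀ i j, (p i j).IsPath) {w : T.V} {i : Fin n}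
    (q : T.G.Walk (T.leaf i) w) (hq : q.IsPath) (hiw : T.leaf i ≠ w) :
    (2 : ℝ) • pvec T q ∈ Submodule.span ℝ (Sset T p) := by
  classical
  rcases T.degree13 w with hdeg | hdeg
  · obtain ⟨j, hj⟩ := T.leafSurj w hdeg
    subst hj
    have hij : i ≠ j := fun h => hiw (congrArg T.leaf h)
    have := pvec_congr T hq (hp i j)
    rw [this]
    exact Submodule.smul_mem _ _ (pvec_p_mem T p hp hij)
  · have hqrnil : ¬ q.reverse.Nil := by
      rw [Walk.nil_iff_length_eq, Walk.length_reverse]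
      intro h0
      exact hiw (Walk.eq_of_length_eq_zero h0)
    have hqr : q.reverse.IsPath := hq.reverse
    have hadj0 : T.G.Adj w (q.reverse.getVert 1) := Walk.adj_snd hqrnil
    obtain ⟨X1, X2, h1a, h2a, h12⟩ := three_card hdeg ⟨q.reverse.getVert 1, hadj0⟩
    have hx1 : X1.1 ≠ q.reverse.getVert 1 := fun h => h1a (Subtype.ext h)
    have hx2 : X2.1 ≠ q.reverse.getVert 1 := fun h => h2a (Subtype.ext h)
    have hx12 : X1.1 ≠ X2.1 := fun h => h12 (Subtype.ext h)
    obtain ⟨j, r1, hr1⟩ := PhyloTreeBranchLeaf T X1.2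
    obtain ⟨k, r2, hr2⟩ := PhyloTreeBranchLeaf T X2.2
    have hg1 : (Walk.cons X1.2 r1).getVert 1 = X1.1 := Walk.snd_cons r1 X1.2
    have hg2 : (Walk.cons X2.2 r2).getVert 1 = X2.1 := Walk.snd_cons r2 X2.2
    -- leaf indices are pairwise distinct
    have hji : j ≠ i := by
      intro h
      subst h
      have he := walk_eq_of_acyclic T.acyclic hqr hr1
      have := congrArg (fun t => Walk.getVert t 1) he
      rw [hg1] at this
      exact hx1 this.symm
    have hki : k ≠ i := by
      intro h
      subst h
      have he := walk_eq_of_acyclic T.acyclic hqr hr2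
      have := congrArg (fun t => Walk.getVert t 1) he
      rw [hg2] at this
      exact hx2 this.symm
    have hjk : j ≠ k := by
      intro h
      subst h
      have he := walk_eq_of_acyclic T.acyclic hr1 hr2
      have := congrArg (fun t => Walk.getVert t 1) he
      rw [hg1, hg2] at this
      exact hx12 this
    -- disjointness of the three branches
    have d01 : ∀ z, z ∈ q.support → z ∈ (Walk.cons X1.2 r1).support → z = w := by
      intro z h1 h2
      refine paths_disjoint T.acyclic hqr hr1 ?_ z ?_ h2
      · rw [hg1]; exact fun h => hx1 h.symm
      · rwa [Walk.support_reverse, List.mem_reverse]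
    have d02 : ∀ z, z ∈ q.support → z ∈ (Walk.cons X2.2 r2).support → z = w := by
      intro z h1 h2
      refine paths_disjoint T.acyclic hqr hr2 ?_ z ?_ h2
      · rw [hg2]; exact fun h => hx2 h.symm
      · rwa [Walk.support_reverse, List.mem_reverse]
    have d12 : ∀ z, z ∈ (Walk.cons X1.2 r1).support → z ∈ (Walk.cons X2.2 r2).support →
        z = w := by
      intro z h1 h2
      refine paths_disjoint T.acyclic hr1 hr2 ?_ z h1 h2
      rw [hg1, hg2]; exact hx12
    -- the three appended paths
    have hA : (q.append (Walk.cons X1.2 r1)).IsPath :=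
      isPath_append_of_disjoint hq hr1 d01
    have hB : (q.append (Walk.cons X2.2 r2)).IsPath :=
      isPath_append_of_disjoint hq hr2 d02
    have hC : ((Walk.cons X1.2 r1).reverse.append (Walk.cons X2.2 r2)).IsPath := by
      refine isPath_append_of_disjoint hr1.reverse hr2 ?_
      intro z h1 h2
      refine d12 z ?_ h2
      rwa [Walk.support_reverse, List.mem_reverse] at h1
    have eA : pvec T (p i j) = pvec T q + pvec T (Walk.cons X1.2 r1) := by
      rw [pvec_congr T (hp i j) hA, pvec_append T hA]
    have eB : pvec T (p i k) = pvec T q + pvec T (Walk.cons X2.2 r2) := by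
      rw [pvec_congr T (hp i k) hB, pvec_append T hB]
    have eC : pvec T (p j k) = pvec T (Walk.cons X1.2 r1) + pvec T (Walk.cons X2.2 r2) := by
      rw [pvec_congr T (hp j k) hC, pvec_append T hC, pvec_reverse]
    have key : (2 : ℝ) • pvec T q = pvec T (p i j) + pvec T (p i k) - pvec T (p j k) := by
      rw [eA, eB, eC]
      module
    rw [key]
    exact sub_mem (add_mem (pvec_p_mem T p hp hji.symm) (pvec_p_mem T p hp hki.symm))
      (pvec_p_mem T p hp hjk)

lemma single_edge_mem {n : ℕ} (T : PhyloTree n)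
    (p : ∀ i j : Fin n, T.G.Walk (T.leaf i) (T.leaf j))
    (hp : ∀ i j, (p i j).IsPath) {a b : T.V} (hab : T.G.Adj a b) :
    pvec T (Walk.cons hab (Walk.nil : T.G.Walk b b)) ∈ Submodule.span ℝ (Sset T p) := by
  classical
  have half : ∀ x : T.G.edgeSet → ℝ,
      (2 : ℝ) • x ∈ Submodule.span ℝ (Sset T p) → x ∈ Submodule.span ℝ (Sset T p) := by
    intro x hx
    have h2 := Submodule.smul_mem (Submodule.span ℝ (Sset T p)) ((2 : ℝ)⁻¹) hx
    rwa [smul_smul, inv_mul_cancel₀ two_ne_zero, one_smul] at h2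
  have hsingle : (Walk.cons hab (Walk.nil : T.G.Walk b b)).IsPath := by
    simp [Walk.cons_isPath_iff, fun h => T.G.ne_of_adj hab h]
  rcases T.degree13 a with hdeg | hdeg
  · obtain ⟨i, hi⟩ := T.leafSurj a hdeg
    subst hi
    exact half _ (two_smul_mem T p hp (Walk.cons hab Walk.nil) hsingle (T.G.ne_of_adj hab))
  · obtain ⟨X1, X2, h1a, h2a, h12⟩ := three_card hdeg ⟨b, hab⟩
    have hx1b : X1.1 ≠ b := fun h => h1a (Subtype.ext h)
    obtain ⟨i, r, hr⟩ := PhyloTreeBranchLeaf T X1.2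
    have hbq0 : b ∉ (Walk.cons X1.2 r).support := by
      intro hb
      have hh := neighbor_mem_support_eq T.acyclic hr hab hb
      rw [show (Walk.cons X1.2 r).getVert 1 = X1.1 from Walk.snd_cons r X1.2] at hh
      exact hx1b hh.symm
    have hia : T.leaf i ≠ a := by
      intro h
      have hcopy : ((Walk.cons X1.2 r).copy rfl h).IsPath := by rwa [Walk.isPath_copy]
      have h0 := Walk.isPath_iff_eq_nil.mp hcopy
      have hlen := congrArg Walk.length h0
      rw [Walk.length_copy] at hlen
      simp at hlen
    have hib : T.leaf i ≠ b := fun h => hbq0 (h ▸ Walk.end_mem_support (Walk.cons X1.2 r))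
    have hQ : ((Walk.cons X1.2 r).reverse.append (Walk.cons hab Walk.nil)).IsPath := by
      refine isPath_append_of_disjoint hr.reverse hsingle ?_
      intro z h1 h2
      rw [Walk.support_reverse, List.mem_reverse] at h1
      simp only [Walk.support_cons, Walk.support_nil, List.mem_cons,
        List.mem_singleton, List.not_mem_nil, or_false] at h2
      rcases h2 with rfl | rfl
      · rfl
      · exact absurd h1 hbq0
    have e1 := pvec_append T hQ
    apply half
    have hm1 := two_smul_mem T p hp _ hQ hib
    have hm2 := two_smul_mem T p hp _ hr.reverse hia
    have key : (2 : ℝ) • pvec T (Walk.cons hab (Walk.nil : T.G.Walk b b))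
        = (2 : ℝ) • pvec T ((Walk.cons X1.2 r).reverse.append (Walk.cons hab Walk.nil))
          - (2 : ℝ) • pvec T (Walk.cons X1.2 r).reverse := by
      rw [e1]
      module
    rw [key]
    exact sub_mem hm1 hm2


theorem stmt12 {n : ℕ} (hn : 3 ≤ n) (T : PhyloTree n)
    (p : ∀ i j : Fin n, T.G.Walk (T.leaf i) (T.leaf j))
    (hp : ∀ i j, (p i j).IsPath) :
    Nat.card T.G.edgeSet = 2 * n - 3 ∧
    Submodule.span ℝ { v : T.G.edgeSet → ℝ | ∃ i j : Fin n, i < j ∧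
        v = Set.indicator {e : T.G.edgeSet | (e : Sym2 T.V) ∈ (p i j).edges}
              (fun _ => (1 : ℝ)) } = ⊤ := by
  classical
  letI : Fintype T.V := Fintype.ofFinite _
  refine ⟨PhyloTreeEdgeCount hn T, ?_⟩
  rw [eq_top_iff]
  rintro x -
  show x ∈ Submodule.span ℝ (Sset T p)
  have hsingle : ∀ e : T.G.edgeSet, Pi.single e (1 : ℝ) ∈ Submodule.span ℝ (Sset T p) := by
    rintro ⟨es, he⟩
    revert he
    induction es using Sym2.ind with
    | _ a b =>
      intro he
      have hab : T.G.Adj a b := he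
      have hrepr : Pi.single (⟨s(a, b), he⟩ : T.G.edgeSet) (1 : ℝ)
          = pvec T (Walk.cons hab (Walk.nil : T.G.Walk b b)) := by
        funext e'
        rw [pvec_apply, Pi.single_apply]
        simp only [Walk.edges_cons, Walk.edges_nil, List.mem_singleton]
        congr 1
        simp [Subtype.ext_iff]
      rw [hrepr]
      exact single_edge_mem T p hp hab
  have hx : x = ∑ e : T.G.edgeSet, x e • (Pi.single e (1 : ℝ) : T.G.edgeSet → ℝ) := by
    funext e'
    rw [Finset.sum_apply]
    simp [Pi.single_apply]
  rw [hx]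
  exact Submodule.sum_mem _ fun e _ => Submodule.smul_mem _ _ (hsingle e)
end

section
/- Let T be a binary phylogenetic [n]-tree whose labeling is circular, assign strictly positive lengths to the edges of T, and let d be the induced path-length metric on the leaves. Then for all 1 ≤ i < j < k < l ≤ n: d(i,k) + d(j,l) ≥ d(i,j) + d(k,l) and d(i,k) + d(j,l) ≥ d(i,l) + d(j,k). -/
open MvPolynomial

open SimpleGraph

lemma mySublistSumLe {α : Type*} (f : α → ℝ) {M L : List α} (h : List.Sublist M L)
    (hf : ∀ a ∈ L, 0 ≤ f a) : (M.map f).sum ≤ (L.map f).sum := by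
  induction h with
  | slnil => simp
  | cons a h ih =>
    simp only [List.map_cons, List.sum_cons]
    have := ih (fun x hx => hf x (List.mem_cons_of_mem a hx))
    have ha := hf a (List.mem_cons_self)
    linarith
  | cons_cons a h ih =>
    simp only [List.map_cons, List.sum_cons]
    have := ih (fun x hx => hf x (List.mem_cons_of_mem a hx))
    linarith

lemma myListSumLe {α : Type*} (f : α → ℝ) {L1 L2 : List α}
    (hnd : L1.Nodup) (hsub : L1 ⊆ L2) (hf : ∀ a ∈ L2, 0 ≤ f a) :
    (L1.map f).sum ≤ (L2.map f).sum := by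
  obtain ⟨l, hperm, hsl⟩ := List.subperm_of_subset hnd hsub
  have h1 : (L1.map f).sum = (l.map f).sum := (hperm.map f).sum_eq.symm
  rw [h1]
  exact mySublistSumLe f hsl hf

variable {V : Type} [DecidableEq V] {G : SimpleGraph V}

/-- The canonical path between two vertices of a connected graph. -/
noncomputable def tpath (hc : G.Connected) (u v : V) : G.Walk u v :=
  ((hc u v).some).bypass

lemma tpath_isPath (hc : G.Connected) (u v : V) : (tpath hc u v).IsPath :=
  Walk.bypass_isPath _

lemma path_eq_tpath (ha : G.IsAcyclic) (hc : G.Connected) {u v : V}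
    (p : G.Walk u v) (hp : p.IsPath) : p = tpath hc u v := by
  have := (isAcyclic_iff_path_unique.mp ha) ⟨p, hp⟩ ⟨tpath hc u v, tpath_isPath hc u v⟩
  exact congrArg Subtype.val this

/-- Weight of the canonical path. -/
noncomputable def Dw (hc : G.Connected) (ℓ : Sym2 V → ℝ) (u v : V) : ℝ :=
  ((tpath hc u v).edges.map ℓ).sum

lemma Dw_symm (ha : G.IsAcyclic) (hc : G.Connected) (ℓ : Sym2 V → ℝ) (u v : V) :
    Dw hc ℓ u v = Dw hc ℓ v u := by
  have h : (tpath hc u v).reverse = tpath hc v u :=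
    path_eq_tpath ha hc _ ((tpath_isPath hc u v).reverse)
  unfold Dw
  rw [← h, Walk.edges_reverse, List.map_reverse, List.sum_reverse]

lemma Dw_le_walk (ha : G.IsAcyclic) (hc : G.Connected) (ℓ : Sym2 V → ℝ)
    (hnn : ∀ e ∈ G.edgeSet, 0 ≤ ℓ e) {u v : V} (w : G.Walk u v) :
    Dw hc ℓ u v ≤ (w.edges.map ℓ).sum := by
  have hbp : w.bypass = tpath hc u v := path_eq_tpath ha hc _ (Walk.bypass_isPath w)
  unfold Dw
  rw [← hbp]
  exact myListSumLe ℓ (Walk.bypass_isPath w).isTrail.edges_nodup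
    (Walk.edges_bypass_subset w) (fun e he => hnn e (w.edges_subset_edgeSet he))

lemma Dw_triangle (ha : G.IsAcyclic) (hc : G.Connected) (ℓ : Sym2 V → ℝ)
    (hnn : ∀ e ∈ G.edgeSet, 0 ≤ ℓ e) (u w v : V) :
    Dw hc ℓ u v ≤ Dw hc ℓ u w + Dw hc ℓ w v := by
  have := Dw_le_walk ha hc ℓ hnn ((tpath hc u w).append (tpath hc w v))
  rwa [Walk.edges_append, List.map_append, List.sum_append] at this

lemma Dw_split (ha : G.IsAcyclic) (hc : G.Connected) (ℓ : Sym2 V → ℝ)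
    {u v w : V} (hw : w ∈ (tpath hc u v).support) :
    Dw hc ℓ u v = Dw hc ℓ u w + Dw hc ℓ w v := by
  classical
  set p := tpath hc u v with hp
  have hpp : p.IsPath := tpath_isPath hc u v
  have h1 : p.takeUntil w hw = tpath hc u w := path_eq_tpath ha hc _ (hpp.takeUntil hw)
  have h2 : p.dropUntil w hw = tpath hc w v := path_eq_tpath ha hc _ (hpp.dropUntil hw)
  have hspec := p.take_spec hw
  have hedges : p.edges = (p.takeUntil w hw).edges ++ (p.dropUntil w hw).edges := by
    conv_lhs => rw [← hspec]
    rw [Walk.edges_append]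
  unfold Dw
  rw [← h1, ← h2, ← hp, hedges, List.map_append, List.sum_append]

theorem stmt14 {n : ℕ} (T : PhyloTree n) (hcirc : T.circular) (ℓ : Sym2 T.V → ℝ)
    (hpos : ∀ e ∈ T.G.edgeSet, 0 < ℓ e) (d : Fin n → Fin n → ℝ)
    (hd : ∀ i j : Fin n, ∀ p : T.G.Walk (T.leaf i) (T.leaf j), p.IsPath →
      d i j = (p.edges.map ℓ).sum)
    (i j k l : Fin n) (hij : i < j) (hjk : j < k) (hkl : k < l) :
    d i j + d k l ≤ d i k + d j l ∧ d i l + d j k ≤ d i k + d j l := by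
    classical
  have ha := T.acyclic
  have hc := T.connected
  have hnn : ∀ e ∈ T.G.edgeSet, 0 ≤ ℓ e := fun e he => (hpos e he).le
  set D := Dw hc ℓ with hD
  have hdD : ∀ a b : Fin n, d a b = D (T.leaf a) (T.leaf b) := fun a b =>
    hd a b (tpath hc _ _) (tpath_isPath hc _ _)
  have hnq := hcirc i j k l hij hjk hkl
  have h2 : ¬ ∀ v, v ∈ (tpath hc (T.leaf i) (T.leaf k)).support →
      v ∉ (tpath hc (T.leaf j) (T.leaf l)).support := by
    intro hdisj
    exact hnq ⟨tpath hc _ _, tpath hc _ _, tpath_isPath hc _ _, tpath_isPath hc _ _, hdisj⟩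
  push_neg at h2
  obtain ⟨w, hw1, hw2⟩ := h2
  have hik : D (T.leaf i) (T.leaf k) = D (T.leaf i) w + D w (T.leaf k) := Dw_split ha hc ℓ hw1
  have hjl : D (T.leaf j) (T.leaf l) = D (T.leaf j) w + D w (T.leaf l) := Dw_split ha hc ℓ hw2
  have t1 : D (T.leaf i) (T.leaf j) ≤ D (T.leaf i) w + D w (T.leaf j) := Dw_triangle ha hc ℓ hnn _ _ _
  have t2 : D (T.leaf k) (T.leaf l) ≤ D (T.leaf k) w + D w (T.leaf l) := Dw_triangle ha hc ℓ hnn _ _ _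
  have t3 : D (T.leaf i) (T.leaf l) ≤ D (T.leaf i) w + D w (T.leaf l) := Dw_triangle ha hc ℓ hnn _ _ _
  have t4 : D (T.leaf j) (T.leaf k) ≤ D (T.leaf j) w + D w (T.leaf k) := Dw_triangle ha hc ℓ hnn _ _ _
  have s1 : D w (T.leaf j) = D (T.leaf j) w := Dw_symm ha hc ℓ _ _
  have s2 : D (T.leaf k) w = D w (T.leaf k) := Dw_symm ha hc ℓ _ _
  rw [hdD i j, hdD k l, hdD i k, hdD j l, hdD i l, hdD j k]
  constructor <;> linarith
end
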